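/- arXiv:2603.00969 — 2 statements merged into one kernel-verified Lean document; each statement's English description precedes it below -/
import Mathlib

section
/- Let D ⊂ ℝⁿ (n ≥ 2) be a domain and let x₀ ∈ ∂D. Let E ⊆ D be a set that is closed in D and nowhere dense in D, and assume D is finitely connected on E, i.e. for every z₀ ∈ E and every neighborhood Ũ of z₀ there is a neighborhood Ṽ ⊆ Ũ of z₀ such that (D ∩ Ṽ) \ E has only finitely many connected components. Assume further that there is m ∈ ℕ, 1 ≤ m < ∞, such that for every neighborhood U of x₀ there is a neighborhood V ⊆ U of x₀ with: (a) V ∩ D is connected, and (b) (V ∩ D) \ E has at most m connected components. Let xₖ, yₖ ∈ D \ E (k = 1,2,…) be sequences both converging to x₀. Then there exist subsequences x_{k_l} and y_{k_l} (l = 1,2,…) and neighborhoods V_l of x₀ with V_l ⊆ B(x₀, 2^{−l}) such that, for every l, the points x_{k_l} and y_{k_l} can be joined by a path γ_l whose image lies in V_l ∩ D and whose image intersects E in at most m − 1 points. -/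
open Set Metric

open Set Metric Topology Filter

namespace Stmt0Proof

attribute [local instance] Classical.propDecidable

noncomputable section

/-- breakpoints for infinite concatenation -/
def u (j : ℕ) : ℝ := 1 - (1/2 : ℝ) ^ j

lemma u_zero : u 0 = 0 := by simp [u]

lemma u_lt_one (j : ℕ) : u j < 1 := by
  have : (0:ℝ) < (1/2 : ℝ) ^ j := by positivity
  simp only [u]; linarith

lemma u_mono : StrictMono u := by
  apply strictMono_nat_of_lt_succ
  intro j
  have h : (1/2:ℝ)^(j+1) = (1/2)^j * (1/2) := pow_succ _ _
  have hp : (0:ℝ) < (1/2:ℝ)^j := by positivity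
  simp only [u, h]; linarith

lemma u_nonneg (j : ℕ) : 0 ≤ u j := by
  rw [← u_zero]
  exact (u_mono.monotone (Nat.zero_le j))

lemma u_succ_sub (j : ℕ) : u (j+1) - u j = (1/2:ℝ)^(j+1) := by
  simp only [u, pow_succ]; ring

lemma exists_u_gt {t : ℝ} (ht : t < 1) : ∃ j, t < u (j+1) := by
  obtain ⟨n, hn⟩ := exists_pow_lt_of_lt_one (by linarith : (0:ℝ) < 1 - t)
    (by norm_num : (1/2:ℝ) < 1)
  refine ⟨n, ?_⟩
  have hp : (0:ℝ) < (1/2:ℝ)^n := by positivity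
  have h2 : (1/2:ℝ)^(n+1) ≤ (1/2)^n := by rw [pow_succ]; nlinarith
  simp only [u]; linarith

def J (t : ℝ) : ℕ := if h : t < 1 then Nat.find (exists_u_gt h) else 0

lemma J_lt {t : ℝ} (h : t < 1) : t < u (J t + 1) := by
  rw [J, dif_pos h]; exact Nat.find_spec (exists_u_gt h)

lemma J_le {t : ℝ} (h : t < 1) (h0 : 0 ≤ t) : u (J t) ≤ t := by
  rw [J, dif_pos h]
  rcases Nat.eq_zero_or_pos (Nat.find (exists_u_gt h)) with h1 | h1
  · rw [h1, u_zero]; exact h0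
  · obtain ⟨i, hi⟩ := Nat.exists_eq_succ_of_ne_zero (Nat.pos_iff_ne_zero.mp h1)
    rw [hi]
    exact not_lt.mp (Nat.find_min (exists_u_gt h) (by omega) : ¬ t < u (i+1))

lemma J_eq {t : ℝ} (j : ℕ) (h1 : u j ≤ t) (h2 : t < u (j+1)) : J t = j := by
  have ht : t < 1 := lt_trans h2 (u_lt_one _)
  rw [J, dif_pos ht]
  refine (Nat.find_eq_iff _).mpr ⟨h2, ?_⟩
  intro i hi
  exact not_lt.mpr (le_trans (u_mono.monotone (Nat.succ_le_of_lt hi)) h1)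

variable {X : Type*} [MetricSpace X]

def glue (q : ℕ → X) (π : ∀ j, Path (q j) (q (j+1))) (z : X) (t : ℝ) : X :=
  if h : t < 1 then (π (J t)).extend ((t - u (J t)) / ((1/2:ℝ) ^ (J t + 1))) else z

lemma glue_piece (q : ℕ → X) (π : ∀ j, Path (q j) (q (j+1))) (z : X) (j : ℕ) {t : ℝ}
    (ht : t ∈ Icc (u j) (u (j+1))) :
    glue q π z t = (π j).extend ((t - u j) / ((1/2:ℝ)^(j+1))) := by
  rcases lt_or_eq_of_le ht.2 with h2 | h2
  · have hJ : J t = j := J_eq j ht.1 h2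
    have ht1 : t < 1 := lt_trans h2 (u_lt_one _)
    rw [glue, dif_pos ht1, hJ]
  · have ht1 : t < 1 := by rw [h2]; exact u_lt_one (j+1)
    have hJ : J t = j + 1 := J_eq (j+1) (le_of_eq h2.symm) (by rw [h2]; exact u_mono (Nat.lt_succ_self (j+1)))
    rw [glue, dif_pos ht1, hJ]
    have hnum : (t - u (j+1)) / ((1/2:ℝ)^(j+1+1)) = 0 := by rw [h2, sub_self, zero_div]
    have hden : (t - u j) / ((1/2:ℝ)^(j+1)) = 1 := by
      rw [h2, u_succ_sub]
      exact div_self (by positivity)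
    rw [hnum, hden, Path.extend_zero, Path.extend_one]

lemma continuousOn_union_closed {Y : Type*} [TopologicalSpace Y] {f : ℝ → Y} {s t : Set ℝ}
    (hsc : IsClosed s) (htc : IsClosed t)
    (hs : ContinuousOn f s) (ht : ContinuousOn f t) : ContinuousOn f (s ∪ t) := by
  intro x hx
  rcases hx with hxs | hxt
  · by_cases hxt' : x ∈ t
    · exact (hs x hxs).union (ht x hxt')
    · exact (hs x hxs).union (continuousWithinAt_of_notMem_closure (by rwa [htc.closure_eq]))
  · by_cases hxs' : x ∈ s
    · exact (hs x hxs').union (ht x hxt)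
    · exact (continuousWithinAt_of_notMem_closure (by rwa [hsc.closure_eq])).union (ht x hxt)

lemma exists_path_limit (z : X) (q : ℕ → X) (π : ∀ j, Path (q j) (q (j+1)))
    (ε : ℕ → ℝ) (hanti : Antitone ε) (hε : Tendsto ε atTop (𝓝 0))
    (hr : ∀ j, range ⇑(π j) ⊆ ball z (ε j)) :
    ∃ p : Path (q 0) z, range ⇑p ⊆ (⋃ j, range ⇑(π j)) ∪ {z} := by
  set g := glue q π z with hgdef
  have hpiece : ∀ j, ∀ t ∈ Icc (u j) (u (j+1)),
      g t = (π j).extend ((t - u j) / ((1/2:ℝ)^(j+1))) := fun j t ht => glue_piece q π z j ht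
  have hcontp : ∀ j, ContinuousOn g (Icc (u j) (u (j+1))) := by
    intro j
    apply ContinuousOn.congr (f := fun t => (π j).extend ((t - u j) / ((1/2:ℝ)^(j+1))))
    · exact ((π j).continuous_extend.comp (by fun_prop)).continuousOn
    · exact fun t ht => hpiece j t ht
  have hcont0 : ∀ j, ContinuousOn g (Icc 0 (u j)) := by
    intro j; induction j with
    | zero =>
        rw [u_zero, Icc_self]
        exact continuousOn_singleton g 0
    | succ i ih =>
        rw [← Icc_union_Icc_eq_Icc (u_nonneg i) (le_of_lt (u_mono (Nat.lt_succ_self i)))]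
        exact continuousOn_union_closed isClosed_Icc isClosed_Icc ih (hcontp i)
  have hg1 : g 1 = z := by rw [hgdef, glue, dif_neg (lt_irrefl 1)]
  have hg0 : g 0 = q 0 := by
    have h0 : (0:ℝ) ∈ Icc (u 0) (u 1) := by
      constructor
      · rw [u_zero]
      · rw [← u_zero]; exact le_of_lt (u_mono Nat.zero_lt_one)
    rw [hpiece 0 0 h0, u_zero, sub_zero, zero_div, Path.extend_zero]
  have hmem : ∀ t ∈ Icc (0:ℝ) 1, g t ∈ (⋃ j, range ⇑(π j)) ∪ {z} := by
    intro t ht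
    rcases lt_or_eq_of_le ht.2 with h2 | h2
    · left
      have h1 : u (J t) ≤ t := J_le h2 ht.1
      have h2' : t < u (J t + 1) := J_lt h2
      rw [hpiece (J t) t ⟨h1, le_of_lt h2'⟩]
      have := (π (J t)).extend_range
      refine mem_iUnion.mpr ⟨J t, ?_⟩
      rw [← this]; exact mem_range_self _
    · right; rw [h2, hg1]; rfl
  have hcont : ContinuousOn g (Icc 0 1) := by
    intro t ht
    rcases lt_or_eq_of_le ht.2 with h2 | h2
    · obtain ⟨j, hj⟩ := exists_u_gt h2
      have h1 : ContinuousWithinAt g (Icc 0 (u (j+1))) t := hcont0 (j+1) t ⟨ht.1, le_of_lt hj⟩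
      apply h1.mono_of_mem_nhdsWithin
      apply mem_nhdsWithin.mpr ⟨Iio (u (j+1)), isOpen_Iio, hj, ?_⟩
      rintro s ⟨hs1, hs2⟩
      exact ⟨hs2.1, le_of_lt hs1⟩
    · subst h2
      show ContinuousWithinAt g (Icc 0 1) 1
      have key : Tendsto g (𝓝[Icc (0:ℝ) 1] 1) (𝓝 (g 1)) := by
        rw [hg1, Metric.tendsto_nhds]
        intro δ hδ
        obtain ⟨j, hj⟩ := (hε.eventually (gt_mem_nhds hδ)).exists
        have hIn : Icc 0 1 ∩ Ioi (u j) ∈ 𝓝[Icc (0:ℝ) 1] 1 :=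
          inter_mem_nhdsWithin _ (Ioi_mem_nhds (u_lt_one j))
        filter_upwards [hIn]
        rintro s ⟨hs2, hs1⟩
        rcases lt_or_eq_of_le hs2.2 with h3 | h3
        · have hle : u (J s) ≤ s := J_le h3 hs2.1
          have hlt : s < u (J s + 1) := J_lt h3
          have hJge : j ≤ J s := by
            by_contra hc
            push_neg at hc
            have : u (J s + 1) ≤ u j := u_mono.monotone (by omega)
            exact absurd (lt_trans hlt (lt_of_le_of_lt this hs1)) (lt_irrefl s)
          have : g s ∈ ball z (ε (J s)) := by
            rw [hpiece (J s) s ⟨hle, le_of_lt hlt⟩]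
            apply hr (J s)
            rw [← (π (J s)).extend_range]
            exact mem_range_self _
          calc dist (g s) z < ε (J s) := mem_ball.mp this
            _ ≤ ε j := hanti hJge
            _ < δ := hj
        · rw [h3, hg1]; simpa using hδ
      exact key
  have hrestrict : Continuous ((Icc (0:ℝ) 1).restrict g) := continuousOn_iff_continuous_restrict.mp hcont
  refine ⟨⟨⟨fun s : unitInterval => g s, ?_⟩, ?_, ?_⟩, ?_⟩
  · exact hrestrict
  · show g ((0 : unitInterval) : ℝ) = q 0
    rw [Set.Icc.coe_zero, hg0]
  · show g ((1 : unitInterval) : ℝ) = z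
    rw [Set.Icc.coe_one, hg1]
  · rintro w ⟨s, rfl⟩
    exact hmem s s.2

end

end Stmt0Proof


namespace Stmt0Proof

lemma exists_infinite_fiber' {α β : Type*} {s : Set α} {f : α → β}
    (hs : s.Infinite) (hf : (f '' s).Finite) : ∃ b, (s ∩ f ⁻¹' {b}).Infinite := by
  by_contra hc
  push_neg at hc
  have : s ⊆ ⋃ b ∈ f '' s, (s ∩ f ⁻¹' {b}) := by
    intro a ha
    exact mem_biUnion (mem_image_of_mem f ha) ⟨ha, rfl⟩
  exact hs ((hf.biUnion (fun b _ => hc b)).subset this)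

lemma joinedIn_of_mem_connectedComponentIn {X : Type*} [TopologicalSpace X]
    [LocallyPathConnectedSpace X] {G : Set X} (hG : IsOpen G) {a b : X}
    (h : b ∈ connectedComponentIn G a) : JoinedIn G a b := by
  have ha : a ∈ G := connectedComponentIn_nonempty_iff.mp ⟨b, h⟩
  have hopen : IsOpen (connectedComponentIn G a) := hG.connectedComponentIn
  have hconn : IsConnected (connectedComponentIn G a) :=
    isConnected_connectedComponentIn_iff.mpr ha
  have hpath : IsPathConnected (connectedComponentIn G a) :=
    hopen.isConnected_iff_isPathConnected.mp hconn
  exact (hpath.joinedIn a (mem_connectedComponentIn ha) b h).mono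
    (connectedComponentIn_subset G a)

/-- Access a point `z ∈ E` from a sequence in `D \ E` converging to it, by a path
meeting `E` only in `z`, staying in a small ball around `z`. -/
lemma exists_access_path {X : Type*} [MetricSpace X] [LocallyPathConnectedSpace X]
    {D E : Set X} (hO : IsOpen (D \ E)) {z : X}
    (hfcz : ∀ U ∈ 𝓝 z, ∃ V ∈ 𝓝 z, V ⊆ U ∧
      {C : Set X | ∃ x ∈ (D ∩ V) \ E, C = connectedComponentIn ((D ∩ V) \ E) x}.Finite)
    {c : ℕ → X} (hc : ∀ k, c k ∈ D \ E) (hlim : Tendsto c atTop (𝓝 z))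
    {θ : ℝ} (hθ : 0 < θ) :
    ∃ k₀, ∃ p : Path (c k₀) z, range ⇑p ⊆ (ball z θ ∩ (D \ E)) ∪ {z} := by
  classical
  -- shrinking radii
  set ε : ℕ → ℝ := fun j => θ * (1/2 : ℝ)^(j+1) with hε
  have hεpos : ∀ j, 0 < ε j := fun j => by positivity
  have hεθ : ∀ j, ε j < θ := by
    intro j
    have h1 : (1/2:ℝ)^(j+1) < 1 := by
      apply pow_lt_one₀ (by norm_num) (by norm_num)
      omega
    calc ε j = θ * (1/2:ℝ)^(j+1) := rfl
      _ < θ * 1 := by apply mul_lt_mul_of_pos_left h1 hθ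
      _ = θ := mul_one θ
  have hanti : Antitone ε := by
    intro i j hij
    have : (1/2:ℝ)^(j+1) ≤ (1/2)^(i+1) :=
      pow_le_pow_of_le_one (by norm_num) (by norm_num) (by omega)
    exact mul_le_mul_of_nonneg_left this (le_of_lt hθ)
  have hεlim : Tendsto ε atTop (𝓝 0) := by
    have h1 : Tendsto (fun j : ℕ => (1/2:ℝ)^j) atTop (𝓝 0) :=
      tendsto_pow_atTop_nhds_zero_of_lt_one (by norm_num) (by norm_num)
    have h2 : Tendsto (fun j : ℕ => (1/2:ℝ)^(j+1)) atTop (𝓝 0) := h1.comp (tendsto_add_atTop_nat 1)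
    simpa [hε] using h2.const_mul θ
  -- choose neighborhoods from the finite-connectivity hypothesis
  have hVex : ∀ j : ℕ, ∃ V ∈ 𝓝 z, V ⊆ ball z (ε j) ∧
      {C : Set X | ∃ x ∈ (D ∩ V) \ E, C = connectedComponentIn ((D ∩ V) \ E) x}.Finite :=
    fun j => hfcz (ball z (ε j)) (ball_mem_nhds z (hεpos j))
  choose V hVnhds hVsub hVfin using hVex
  set S : ℕ → Set X := fun j => (D ∩ V j) \ E with hS
  have hSsub : ∀ j, S j ⊆ ball z (ε j) ∩ (D \ E) := by
    rintro j w ⟨⟨hw1, hw2⟩, hw3⟩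
    exact ⟨hVsub j hw2, hw1, hw3⟩
  -- the pigeonhole step
  have step : ∀ (j : ℕ) (s : Set ℕ), s.Infinite → ∃ t, t ⊆ s ∧ t.Infinite ∧
      (∀ k ∈ t, c k ∈ S j) ∧
      (∀ k ∈ t, ∀ k' ∈ t, connectedComponentIn (S j) (c k) = connectedComponentIn (S j) (c k')) := by
    intro j s hs
    obtain ⟨N, hN⟩ := eventually_atTop.mp (hlim.eventually (hVnhds j))
    have hbadfin : {k : ℕ | c k ∉ V j}.Finite := by
      apply (finite_Iio N).subset
      intro k hk
      by_contra hk'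
      exact hk (hN k (not_lt.mp hk'))
    set s' := s \ {k : ℕ | c k ∉ V j} with hs'
    have hs'inf : s'.Infinite := hs.diff hbadfin
    have hs'S : ∀ k ∈ s', c k ∈ S j := by
      rintro k ⟨hk1, hk2⟩
      simp only [mem_setOf_eq, not_not] at hk2
      exact ⟨⟨(hc k).1, hk2⟩, (hc k).2⟩
    have himfin : ((fun k => connectedComponentIn (S j) (c k)) '' s').Finite := by
      apply (hVfin j).subset
      rintro _ ⟨k, hk, rfl⟩
      exact ⟨c k, hs'S k hk, rfl⟩
    obtain ⟨b, hb⟩ := exists_infinite_fiber' hs'inf himfin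
    refine ⟨s' ∩ _ ⁻¹' {b}, (inter_subset_left).trans diff_subset, hb, ?_, ?_⟩
    · exact fun k hk => hs'S k hk.1
    · rintro k ⟨_, hk2⟩ k' ⟨_, hk2'⟩
      simp only [mem_preimage, mem_singleton_iff] at hk2 hk2'
      rw [hk2, hk2']
  choose T hTsub hTinf hTmem hTcomp using step
  -- iterate
  let Nrec : ℕ → {s : Set ℕ // s.Infinite} := fun j =>
    Nat.rec ⟨T 0 univ infinite_univ, hTinf 0 univ infinite_univ⟩
      (fun i prev => ⟨T (i+1) prev.1 prev.2, hTinf (i+1) prev.1 prev.2⟩) j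
  have hNrec_succ : ∀ j, (Nrec (j+1)).1 = T (j+1) (Nrec j).1 (Nrec j).2 := fun j => rfl
  have hNrec0 : (Nrec 0).1 = T 0 univ infinite_univ := rfl
  have hNmem : ∀ j, ∀ k ∈ (Nrec j).1, c k ∈ S j := by
    intro j
    cases j with
    | zero => exact hTmem 0 univ infinite_univ
    | succ i => exact hTmem (i+1) (Nrec i).1 (Nrec i).2
  have hNcomp : ∀ j, ∀ k ∈ (Nrec j).1, ∀ k' ∈ (Nrec j).1,
      connectedComponentIn (S j) (c k) = connectedComponentIn (S j) (c k') := by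
    intro j
    cases j with
    | zero => exact hTcomp 0 univ infinite_univ
    | succ i => exact hTcomp (i+1) (Nrec i).1 (Nrec i).2
  have hNsub : ∀ j, (Nrec (j+1)).1 ⊆ (Nrec j).1 := fun j => hTsub (j+1) (Nrec j).1 (Nrec j).2
  -- select indices
  have hNne : ∀ j, ∃ k, k ∈ (Nrec j).1 := fun j => (Nrec j).2.nonempty
  choose ksel hksel using hNne
  set q : ℕ → X := fun j => c (ksel j) with hq
  -- the open sets
  set H : ℕ → Set X := fun j => ball z (ε j) ∩ (D \ E) with hH
  have hHopen : ∀ j, IsOpen (H j) := fun j => isOpen_ball.inter hO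
  -- joinedness
  have hjoin : ∀ j, JoinedIn (H j) (q j) (q (j+1)) := by
    intro j
    have h1 : c (ksel j) ∈ S j := hNmem j _ (hksel j)
    have h2 : c (ksel (j+1)) ∈ S j := hNmem j _ (hNsub j (hksel (j+1)))
    have hcomp : connectedComponentIn (S j) (q j) = connectedComponentIn (S j) (q (j+1)) :=
      hNcomp j _ (hksel j) _ (hNsub j (hksel (j+1)))
    have hmem2 : q (j+1) ∈ connectedComponentIn (S j) (q j) := by
      rw [hcomp]; exact mem_connectedComponentIn h2
    have hKH : connectedComponentIn (S j) (q j) ⊆ H j :=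
      (connectedComponentIn_subset _ _).trans (hSsub j)
    have hmem3 : q (j+1) ∈ connectedComponentIn (H j) (q j) :=
      (isPreconnected_connectedComponentIn.subset_connectedComponentIn
        (mem_connectedComponentIn h1) hKH) hmem2
    exact joinedIn_of_mem_connectedComponentIn (hHopen j) hmem3
  have hjoin' : ∀ j, ∃ p : Path (q j) (q (j+1)), ∀ t, p t ∈ H j := fun j => hjoin j
  choose π hπ using hjoin'
  have hrange : ∀ j, range ⇑(π j) ⊆ ball z (ε j) := by
    rintro j _ ⟨t, rfl⟩
    exact (hπ j t).1
  obtain ⟨p, hp⟩ := exists_path_limit z q π ε hanti hεlim hrange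
  refine ⟨ksel 0, p, ?_⟩
  intro w hw
  rcases hp hw with h1 | h1
  · obtain ⟨j, hj⟩ := mem_iUnion.mp h1
    obtain ⟨t, rfl⟩ := hj
    left
    exact ⟨mem_ball.mpr (lt_trans (mem_ball.mp (hπ j t).1) (hεθ j)), (hπ j t).2⟩
  · right; exact h1

end Stmt0Proof
namespace Stmt0Proof

/-- Paths with a cost bound on the number of points of `E` they meet. -/
def Pc {X : Type*} [TopologicalSpace X] (S E : Set X) (j : ℕ) (a b : X) : Prop :=
  ∃ p : Path a b, range ⇑p ⊆ S ∧ (range ⇑p ∩ E).encard ≤ (j : ℕ∞)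

lemma Pc.trans {X : Type*} [TopologicalSpace X] {S E : Set X} {i j : ℕ} {a b c : X}
    (h1 : Pc S E i a b) (h2 : Pc S E j b c) : Pc S E (i + j) a c := by
  obtain ⟨p, hp1, hp2⟩ := h1
  obtain ⟨q, hq1, hq2⟩ := h2
  refine ⟨p.trans q, ?_, ?_⟩
  · rw [Path.trans_range]; exact union_subset hp1 hq1
  · calc (range ⇑(p.trans q) ∩ E).encard
        = ((range ⇑p ∩ E) ∪ (range ⇑q ∩ E)).encard := by
          rw [Path.trans_range, union_inter_distrib_right]
      _ ≤ (range ⇑p ∩ E).encard + (range ⇑q ∩ E).encard := Set.encard_union_le _ _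
      _ ≤ (i : ℕ∞) + (j : ℕ∞) := add_le_add hp2 hq2
      _ = ((i + j : ℕ) : ℕ∞) := by rw [Nat.cast_add]

lemma Pc.mono_cost {X : Type*} [TopologicalSpace X] {S E : Set X} {i j : ℕ} {a b : X}
    (h : Pc S E i a b) (hij : i ≤ j) : Pc S E j a b := by
  obtain ⟨p, hp1, hp2⟩ := h
  exact ⟨p, hp1, le_trans hp2 (by exact_mod_cast hij)⟩

lemma key {n : ℕ}
    (D : Set (EuclideanSpace ℝ (Fin n))) (hDopen : IsOpen D)
    (x₀ : EuclideanSpace ℝ (Fin n))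
    (E : Set (EuclideanSpace ℝ (Fin n)))
    (hEclosed : closure E ∩ D = E)
    (hEnwd : interior (closure E ∩ D) = ∅)
    (hfc : ∀ z₀ ∈ E, ∀ U ∈ nhds z₀, ∃ V ∈ nhds z₀, V ⊆ U ∧
      {C : Set (EuclideanSpace ℝ (Fin n)) |
        ∃ x ∈ (D ∩ V) \ E, C = connectedComponentIn ((D ∩ V) \ E) x}.Finite)
    (m : ℕ) (hm : 1 ≤ m)
    (hx₀fc : ∀ U ∈ nhds x₀, ∃ V ∈ nhds x₀, V ⊆ U ∧ IsConnected (V ∩ D) ∧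
      {C : Set (EuclideanSpace ℝ (Fin n)) |
        ∃ x ∈ (V ∩ D) \ E, C = connectedComponentIn ((V ∩ D) \ E) x}.encard ≤ m)
    {r : ℝ} (hr : 0 < r) :
    ∃ ρ : ℝ, 0 < ρ ∧ ρ ≤ r ∧ ∀ x' ∈ ball x₀ ρ ∩ (D \ E), ∀ y' ∈ ball x₀ ρ ∩ (D \ E),
      ∃ p : Path x' y', range ⇑p ⊆ ball x₀ r ∩ D ∧ (range ⇑p ∩ E).encard ≤ ((m - 1 : ℕ) : ℕ∞) := by
  classical
  have hDo : IsOpen (D \ E) := by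
    have hde : D \ E = D ∩ (closure E)ᶜ := by
      ext w
      constructor
      · rintro ⟨hD, hE⟩
        exact ⟨hD, fun hcl => hE (by rw [← hEclosed]; exact ⟨hcl, hD⟩)⟩
      · rintro ⟨hD, hncl⟩
        exact ⟨hD, fun hE => hncl (subset_closure hE)⟩
    rw [hde]
    exact hDopen.inter isClosed_closure.isOpen_compl
  obtain ⟨V₁, hV₁n, hV₁sub, hV₁conn, hV₁card⟩ :=
    hx₀fc (ball x₀ (r/2)) (ball_mem_nhds _ (by positivity))
  obtain ⟨ρ₁, hρ₁pos, hρ₁ball⟩ := Metric.mem_nhds_iff.mp hV₁n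
  obtain ⟨V₂, hV₂n, hV₂sub, hV₂conn, hV₂card⟩ := hx₀fc (interior V₁ ∩ ball x₀ (ρ₁/4))
    (Filter.inter_mem (interior_mem_nhds.mpr hV₁n) (ball_mem_nhds _ (by positivity)))
  obtain ⟨ρ₂, hρ₂pos, hρ₂ball⟩ := Metric.mem_nhds_iff.mp hV₂n
  refine ⟨min ρ₂ r, lt_min hρ₂pos hr, min_le_right _ _, ?_⟩
  rintro x' ⟨hx'b, hx'D, hx'E⟩ y' ⟨hy'b, hy'D, hy'E⟩
  set Ω := (V₁ ∩ D) \ E with hΩ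
  set G := ball x₀ r ∩ (D \ E) with hG
  have hGopen : IsOpen G := isOpen_ball.inter hDo
  have hV₁r : V₁ ⊆ ball x₀ r := hV₁sub.trans (ball_subset_ball (by linarith))
  have hΩG : Ω ⊆ G := by rintro w ⟨⟨h1, h2⟩, h3⟩; exact ⟨hV₁r h1, h2, h3⟩
  have hΩDE : Ω ⊆ D \ E := fun w hw => ⟨hw.1.2, hw.2⟩
  have hGsub : G ⊆ ball x₀ r ∩ D := fun w hw => ⟨hw.1, hw.2.1⟩
  have hballρ : ball x₀ (min ρ₂ r) ⊆ V₂ := (ball_subset_ball (min_le_left _ _)).trans hρ₂ball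
  have hV₂V₁ : V₂ ⊆ V₁ := fun w hw => interior_subset (hV₂sub hw).1
  have hV₂ball : V₂ ⊆ ball x₀ (ρ₁/4) := fun w hw => (hV₂sub hw).2
  have hx'Ω : x' ∈ Ω := ⟨⟨hV₂V₁ (hballρ hx'b), hx'D⟩, hx'E⟩
  have hy'Ω : y' ∈ Ω := ⟨⟨hV₂V₁ (hballρ hy'b), hy'D⟩, hy'E⟩
  set 𝒞 : Set (Set (EuclideanSpace ℝ (Fin n))) :=
    {C | ∃ x ∈ Ω, C = connectedComponentIn Ω x} with h𝒞
  have h𝒞fin : 𝒞.Finite := by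
    rw [← Set.not_infinite]
    intro hinf
    rw [hinf.encard_eq] at hV₁card
    exact ENat.coe_ne_top m (top_le_iff.mp hV₁card)
  have h𝒞ncard : 𝒞.ncard ≤ m := by
    obtain ⟨hfin, n₀, he, hn⟩ := Set.encard_le_coe_iff.mp hV₁card
    have h1 : 𝒞.ncard = n₀ := by rw [Set.ncard_def, he]; simp
    omega
  -- basic path facts
  have sameG : ∀ a b : EuclideanSpace ℝ (Fin n), b ∈ connectedComponentIn G a →
      Pc (ball x₀ r ∩ D) E 0 a b := by
    intro a b hb
    obtain ⟨p, hp⟩ := joinedIn_of_mem_connectedComponentIn hGopen hb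
    refine ⟨p, ?_, ?_⟩
    · rintro _ ⟨t, rfl⟩; exact hGsub (hp t)
    · have hempty : range ⇑p ∩ E = ∅ := by
        apply eq_empty_of_forall_notMem
        rintro w ⟨⟨t, rfl⟩, hwE⟩
        exact (hp t).2.2 hwE
      rw [hempty]
      simp
  have sameΩ : ∀ C ∈ 𝒞, ∀ a ∈ C, ∀ b ∈ C, Pc (ball x₀ r ∩ D) E 0 a b := by
    rintro C ⟨w, hw, rfl⟩ a ha b hb
    have h1 : connectedComponentIn Ω a = connectedComponentIn Ω w := (connectedComponentIn_eq ha).symm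
    have hb' : b ∈ connectedComponentIn Ω a := by rw [h1]; exact hb
    exact sameG a b (connectedComponentIn_mono a hΩG hb')
  -- the crossing lemma
  have cross : ∀ C ∈ 𝒞, ∀ C' ∈ 𝒞, (closure C ∩ closure C' ∩ D).Nonempty →
      ∀ a ∈ C, ∀ b ∈ C', Pc (ball x₀ r ∩ D) E 1 a b := by
    rintro C hC C' hC' ⟨z, ⟨hzC, hzC'⟩, hzD⟩ a ha b hb
    have hCΩ : C ⊆ Ω := by obtain ⟨w, hw, rfl⟩ := hC; exact connectedComponentIn_subset _ _
    have hC'Ω : C' ⊆ Ω := by obtain ⟨w, hw, rfl⟩ := hC'; exact connectedComponentIn_subset _ _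
    have hzhalf : dist z x₀ ≤ r/2 := by
      have h1 : closure C ⊆ closedBall x₀ (r/2) := by
        apply closure_minimal ?_ isClosed_closedBall
        exact fun w hw => mem_closedBall.mpr (le_of_lt (mem_ball.mp (hV₁sub (hCΩ hw).1.1)))
      exact mem_closedBall.mp (h1 hzC)
    obtain ⟨δ, hδpos, hδD⟩ := Metric.isOpen_iff.mp hDopen z hzD
    set θ := min (r/4) δ with hθ
    have hθpos : 0 < θ := lt_min (by positivity) hδpos
    have hθball : ball z θ ⊆ ball x₀ r := by
      intro w hw
      have h1 : dist w z < r/4 := lt_of_lt_of_le (mem_ball.mp hw) (min_le_left _ _)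
      have h2 := dist_triangle w z x₀
      exact mem_ball.mpr (by linarith)
    by_cases hzE : z ∈ E
    · obtain ⟨c, hcC, hclim⟩ := mem_closure_iff_seq_limit.mp hzC
      obtain ⟨c', hc'C, hc'lim⟩ := mem_closure_iff_seq_limit.mp hzC'
      have hcDE : ∀ k, c k ∈ D \ E := fun k => hΩDE (hCΩ (hcC k))
      have hc'DE : ∀ k, c' k ∈ D \ E := fun k => hΩDE (hC'Ω (hc'C k))
      obtain ⟨k₀, p₁, hp₁⟩ := exists_access_path hDo (hfc z hzE) hcDE hclim hθpos
      obtain ⟨k₀', p₂, hp₂⟩ := exists_access_path hDo (hfc z hzE) hc'DE hc'lim hθpos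
      have hmid : Pc (ball x₀ r ∩ D) E 1 (c k₀) (c' k₀') := by
        refine ⟨p₁.trans p₂.symm, ?_, ?_⟩
        · rw [Path.trans_range, Path.symm_range]
          rintro w (hw | hw)
          · rcases hp₁ hw with h | h
            · exact ⟨hθball h.1, h.2.1⟩
            · rw [mem_singleton_iff] at h; subst h
              exact ⟨mem_ball.mpr (lt_of_le_of_lt hzhalf (by linarith)), hzD⟩
          · rcases hp₂ hw with h | h
            · exact ⟨hθball h.1, h.2.1⟩
            · rw [mem_singleton_iff] at h; subst h
              exact ⟨mem_ball.mpr (lt_of_le_of_lt hzhalf (by linarith)), hzD⟩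
        · have hsub : range ⇑(p₁.trans p₂.symm) ∩ E ⊆ {z} := by
            rw [Path.trans_range, Path.symm_range]
            rintro w ⟨hw | hw, hwE⟩
            · rcases hp₁ hw with h | h
              · exact absurd hwE h.2.2
              · exact h
            · rcases hp₂ hw with h | h
              · exact absurd hwE h.2.2
              · exact h
          calc (range ⇑(p₁.trans p₂.symm) ∩ E).encard
              ≤ ({z} : Set (EuclideanSpace ℝ (Fin n))).encard := Set.encard_le_encard hsub
            _ = 1 := Set.encard_singleton z
            _ = ((1:ℕ) : ℕ∞) := by norm_cast
      have h1 : Pc (ball x₀ r ∩ D) E 0 a (c k₀) := sameΩ C hC a ha (c k₀) (hcC k₀)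
      have h2 : Pc (ball x₀ r ∩ D) E 0 (c' k₀') b := sameΩ C' hC' (c' k₀') (hc'C k₀') b hb
      have h3 := (h1.trans hmid).trans h2
      simpa using h3
    · have hzDE : z ∈ D \ E := ⟨hzD, hzE⟩
      obtain ⟨δ₂, hδ₂pos, hδ₂DE⟩ := Metric.isOpen_iff.mp hDo z hzDE
      set θ' := min θ δ₂ with hθ'
      have hθ'pos : 0 < θ' := lt_min hθpos hδ₂pos
      have hθ'G : ball z θ' ⊆ G := by
        intro w hw
        have h1 : w ∈ ball z θ := mem_ball.mpr (lt_of_lt_of_le (mem_ball.mp hw) (min_le_left _ _))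
        have h2 : w ∈ D \ E :=
          hδ₂DE (mem_ball.mpr (lt_of_lt_of_le (mem_ball.mp hw) (min_le_right _ _)))
        exact ⟨hθball h1, h2⟩
      obtain ⟨a', ha'C, ha'd⟩ := Metric.mem_closure_iff.mp hzC θ' hθ'pos
      obtain ⟨b', hb'C, hb'd⟩ := Metric.mem_closure_iff.mp hzC' θ' hθ'pos
      have ha'ball : a' ∈ ball z θ' := mem_ball.mpr (by rw [dist_comm]; exact ha'd)
      have hb'ball : b' ∈ ball z θ' := mem_ball.mpr (by rw [dist_comm]; exact hb'd)
      have hmid : Pc (ball x₀ r ∩ D) E 0 a' b' := by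
        apply sameG
        have hpre : IsPreconnected (ball z θ') := (convex_ball z θ').isPreconnected
        exact (hpre.subset_connectedComponentIn ha'ball hθ'G) hb'ball
      have h1 : Pc (ball x₀ r ∩ D) E 0 a a' := sameΩ C hC a ha a' ha'C
      have h2 : Pc (ball x₀ r ∩ D) E 0 b' b := sameΩ C' hC' b' hb'C b hb
      exact ((h1.trans hmid).trans h2).mono_cost (by omega)
  -- reachability sets
  set C₀ := connectedComponentIn Ω x' with hC₀
  have hC₀𝒞 : C₀ ∈ 𝒞 := ⟨x', hx'Ω, rfl⟩
  set F : Set (Set (EuclideanSpace ℝ (Fin n))) → Set (Set (EuclideanSpace ℝ (Fin n))) :=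
    fun A => A ∪ {C' | C' ∈ 𝒞 ∧ ∃ C ∈ A, (closure C ∩ closure C' ∩ D).Nonempty} with hF
  set R : ℕ → Set (Set (EuclideanSpace ℝ (Fin n))) := fun j => F^[j] {C₀} with hR
  have hR0 : R 0 = {C₀} := rfl
  have hRsucc : ∀ j, R (j+1) = F (R j) := by
    intro j
    show F^[j+1] {C₀} = F (F^[j] {C₀})
    rw [Function.iterate_succ_apply']
  have hRmono : ∀ j, R j ⊆ R (j+1) := by
    intro j; rw [hRsucc]; exact subset_union_left
  have hRmono' : Monotone R := monotone_nat_of_le_succ hRmono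
  have hRsub𝒞 : ∀ j, R j ⊆ 𝒞 := by
    intro j; induction j with
    | zero => rw [hR0]; exact singleton_subset_iff.mpr hC₀𝒞
    | succ i ih =>
        rw [hRsucc]
        rintro C (hC | hC)
        · exact ih hC
        · exact hC.1
  have hcost : ∀ j, ∀ C ∈ R j, ∀ w ∈ C, Pc (ball x₀ r ∩ D) E j x' w := by
    intro j
    induction j with
    | zero =>
        rintro C hC w hw
        rw [hR0, mem_singleton_iff] at hC
        subst hC
        exact sameG x' w (connectedComponentIn_mono x' hΩG hw)
    | succ i ih =>
        intro C hC w hw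
        rw [hRsucc] at hC
        rcases hC with hC | ⟨hC𝒞, C'', hC''R, htouch⟩
        · exact (ih C hC w hw).mono_cost (by omega)
        · obtain ⟨w₀, hw₀Ω, hCeq⟩ := hRsub𝒞 i hC''R
          have hw₀C'' : w₀ ∈ C'' := by rw [hCeq]; exact mem_connectedComponentIn hw₀Ω
          have h1 : Pc (ball x₀ r ∩ D) E i x' w₀ := ih C'' hC''R w₀ hw₀C''
          have h2 : Pc (ball x₀ r ∩ D) E 1 w₀ w :=
            cross C'' (hRsub𝒞 i hC''R) C hC𝒞 htouch w₀ hw₀C'' w hw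
          simpa using h1.trans h2
  have hy'C : connectedComponentIn Ω y' ∈ 𝒞 := ⟨y', hy'Ω, rfl⟩
  have hreach : ∃ j, connectedComponentIn Ω y' ∈ R j := by
    by_contra hnot
    push_neg at hnot
    set A : Set (Set (EuclideanSpace ℝ (Fin n))) := ⋃ j, R j with hA
    have hA𝒞 : A ⊆ 𝒞 := iUnion_subset hRsub𝒞
    have hAtouch : ∀ C ∈ A, ∀ C' ∈ 𝒞, (closure C ∩ closure C' ∩ D).Nonempty → C' ∈ A := by
      rintro C hC C' hC' ht
      obtain ⟨j, hj⟩ := mem_iUnion.mp hC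
      exact mem_iUnion.mpr ⟨j+1, by rw [hRsucc]; exact Or.inr ⟨hC', C, hj, ht⟩⟩
    have hAfin : A.Finite := h𝒞fin.subset hA𝒞
    set SA : Set (EuclideanSpace ℝ (Fin n)) := ⋃ C ∈ A, closure C with hSA
    set SB : Set (EuclideanSpace ℝ (Fin n)) := ⋃ C ∈ 𝒞 \ A, closure C with hSB
    have hSAc : IsClosed SA := hAfin.isClosed_biUnion (fun _ _ => isClosed_closure)
    have hSBc : IsClosed SB :=
      (h𝒞fin.subset diff_subset).isClosed_biUnion (fun _ _ => isClosed_closure)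
    have hΩcover : Ω ⊆ SA ∪ SB := by
      intro p hp
      have hpC : connectedComponentIn Ω p ∈ 𝒞 := ⟨p, hp, rfl⟩
      have hpmem : p ∈ closure (connectedComponentIn Ω p) :=
        subset_closure (mem_connectedComponentIn hp)
      by_cases hpA : connectedComponentIn Ω p ∈ A
      · exact Or.inl (mem_biUnion hpA hpmem)
      · exact Or.inr (mem_biUnion ⟨hpC, hpA⟩ hpmem)
    have hcover : V₂ ∩ D ⊆ SA ∪ SB := by
      rintro w ⟨hwV₂, hwD⟩
      by_cases hwE : w ∈ E
      · have hwcl : w ∈ closure Ω := by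
          rw [Metric.mem_closure_iff]
          intro ε hε
          obtain ⟨δD, hδDpos, hδDD⟩ := Metric.isOpen_iff.mp hDopen w hwD
          set δ' := min (min ε δD) (ρ₁/2) with hδ'
          have hδ'pos : 0 < δ' := lt_min (lt_min hε hδDpos) (by positivity)
          have hδ'D : ball w δ' ⊆ D := fun v hv => hδDD (mem_ball.mpr
            (lt_of_lt_of_le (mem_ball.mp hv) ((min_le_left _ _).trans (min_le_right _ _))))
          have hex : ∃ v ∈ ball w δ', v ∉ E := by
            by_contra hcon
            push_neg at hcon
            have hsubE : ball w δ' ⊆ closure E ∩ D :=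
              fun v hv => ⟨subset_closure (hcon v hv), hδ'D hv⟩
            have hsubI : ball w δ' ⊆ interior (closure E ∩ D) :=
              isOpen_ball.subset_interior_iff.mpr hsubE
            rw [hEnwd] at hsubI
            exact hsubI (mem_ball_self hδ'pos)
          obtain ⟨v, hvball, hvE⟩ := hex
          have hvD : v ∈ D := hδ'D hvball
          have hvV₁ : v ∈ V₁ := by
            apply hρ₁ball
            have h1 : dist v w < ρ₁/2 :=
              lt_of_lt_of_le (mem_ball.mp hvball) (min_le_right _ _)
            have h2 : dist w x₀ < ρ₁/4 := mem_ball.mp (hV₂ball hwV₂)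
            have h3 := dist_triangle v w x₀
            exact mem_ball.mpr (by linarith)
          refine ⟨v, ⟨⟨hvV₁, hvD⟩, hvE⟩, ?_⟩
          have h1 : dist v w < ε :=
            lt_of_lt_of_le (mem_ball.mp hvball) ((min_le_left _ _).trans (min_le_left _ _))
          rw [dist_comm] at h1
          exact h1
        have hclsub : closure Ω ⊆ SA ∪ SB := closure_minimal hΩcover (hSAc.union hSBc)
        exact hclsub hwcl
      · exact hΩcover ⟨⟨hV₂V₁ hwV₂, hwD⟩, hwE⟩
    have hx'mem : (V₂ ∩ D) ∩ SA |>.Nonempty := by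
      refine ⟨x', ⟨hballρ hx'b, hx'D⟩, ?_⟩
      have hC₀A : C₀ ∈ A := mem_iUnion.mpr ⟨0, by rw [hR0]; exact rfl⟩
      exact mem_biUnion hC₀A (subset_closure (mem_connectedComponentIn hx'Ω))
    have hy'mem : (V₂ ∩ D) ∩ SB |>.Nonempty := by
      refine ⟨y', ⟨hballρ hy'b, hy'D⟩, ?_⟩
      have hyA : connectedComponentIn Ω y' ∉ A := by
        intro hcon
        obtain ⟨j, hj⟩ := mem_iUnion.mp hcon
        exact hnot j hj
      exact mem_biUnion ⟨hy'C, hyA⟩ (subset_closure (mem_connectedComponentIn hy'Ω))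
    obtain ⟨w, hwVD, hwA, hwB⟩ :=
      isPreconnected_closed_iff.mp hV₂conn.isPreconnected SA SB hSAc hSBc hcover hx'mem hy'mem
    obtain ⟨C, hCA, hwC⟩ := mem_iUnion₂.mp hwA
    obtain ⟨C', hC'B, hwC'⟩ := mem_iUnion₂.mp hwB
    exact hC'B.2 (hAtouch C hCA C' hC'B.1 ⟨w, ⟨hwC, hwC'⟩, hwVD.2⟩)
  obtain ⟨Jy, hJy⟩ := hreach
  have hfinal : connectedComponentIn Ω y' ∈ R (m-1) := by
    by_cases hJle : Jy ≤ m-1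
    · exact hRmono' hJle hJy
    · have hstab : ∃ j, j < m ∧ R j = R (j+1) := by
        by_contra hc
        push_neg at hc
        have hgrow : ∀ j, j ≤ m → j + 1 ≤ (R j).ncard := by
          intro j
          induction j with
          | zero => intro _; rw [hR0]; simp
          | succ i ih =>
              intro hle
              have h1 : R i ⊂ R (i+1) := (hRmono i).ssubset_of_ne (hc i (by omega))
              have h2 : (R i).ncard < (R (i+1)).ncard :=
                Set.ncard_lt_ncard h1 (h𝒞fin.subset (hRsub𝒞 (i+1)))
              have h3 := ih (by omega)
              omega
        have h1 : m + 1 ≤ (R m).ncard := hgrow m (le_refl m)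
        have h2 : (R m).ncard ≤ 𝒞.ncard := Set.ncard_le_ncard (hRsub𝒞 m) h𝒞fin
        omega
      obtain ⟨j₀, hj₀m, hj₀eq⟩ := hstab
      have hfix : ∀ i, R (j₀ + i) = R j₀ := by
        intro i
        induction i with
        | zero => rfl
        | succ ii ih =>
            have hstep : R (j₀ + ii + 1) = F (R (j₀ + ii)) := hRsucc _
            have : R (j₀ + (ii+1)) = F (R j₀) := by
              rw [show j₀ + (ii+1) = (j₀ + ii) + 1 from rfl, hstep, ih]
            rw [this, ← hRsucc j₀]
            exact hj₀eq.symm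
      have hmem : connectedComponentIn Ω y' ∈ R j₀ := by
        have h1 : R Jy = R j₀ := by
          have h2 := hfix (Jy - j₀)
          rwa [show j₀ + (Jy - j₀) = Jy by omega] at h2
        rw [← h1]; exact hJy
      exact hRmono' (by omega) hmem
  obtain ⟨p, hp1, hp2⟩ := hcost (m-1) _ hfinal y' (mem_connectedComponentIn hy'Ω)
  exact ⟨p, hp1, hp2⟩

end Stmt0Proof

/-- Lemma 2.1 of the paper: Let `D ⊆ ℝⁿ`, `n ≥ 2`, be a domain,
`x₀ ∈ ∂D`, and let `E ⊆ D` be closed and nowhere dense in `D` with `D` finitely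
connected on `E`; assume the finite-component condition at `x₀` with bound `m`.
If `xₖ, yₖ ∈ D ∖ E` both converge to `x₀`, then there are subsequences and
neighborhoods `V_l ⊆ B(x₀, 2^{-l})` of `x₀` such that `x_{k_l}` and `y_{k_l}`
can be joined by a path in `V_l ∩ D` meeting `E` in at most `m - 1` points. -/
theorem stmt_0 {n : ℕ} (hn : 2 ≤ n)
    (D : Set (EuclideanSpace ℝ (Fin n))) (hDopen : IsOpen D) (hDconn : IsConnected D)
    (x₀ : EuclideanSpace ℝ (Fin n)) (hx₀ : x₀ ∈ frontier D)
    (E : Set (EuclideanSpace ℝ (Fin n))) (hED : E ⊆ D)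
    -- `E` is closed in `D` :
    (hEclosed : closure E ∩ D = E)
    -- `E` is nowhere dense in `D` (the closure of `E` relative to `D` has empty
    -- interior relative to the open set `D`) :
    (hEnwd : interior (closure E ∩ D) = ∅)
    -- `D` is finitely connected on `E` :
    (hfc : ∀ z₀ ∈ E, ∀ U ∈ nhds z₀, ∃ V ∈ nhds z₀, V ⊆ U ∧
      {C : Set (EuclideanSpace ℝ (Fin n)) |
        ∃ x ∈ (D ∩ V) \ E, C = connectedComponentIn ((D ∩ V) \ E) x}.Finite)
    (m : ℕ) (hm : 1 ≤ m)
    -- the finite-component condition at the boundary point `x₀` :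
    (hx₀fc : ∀ U ∈ nhds x₀, ∃ V ∈ nhds x₀, V ⊆ U ∧ IsConnected (V ∩ D) ∧
      {C : Set (EuclideanSpace ℝ (Fin n)) |
        ∃ x ∈ (V ∩ D) \ E, C = connectedComponentIn ((V ∩ D) \ E) x}.encard ≤ m)
    (x y : ℕ → EuclideanSpace ℝ (Fin n))
    (hx : ∀ k, x k ∈ D \ E) (hy : ∀ k, y k ∈ D \ E)
    (hxconv : Filter.Tendsto x Filter.atTop (nhds x₀))
    (hyconv : Filter.Tendsto y Filter.atTop (nhds x₀)) :
    ∃ k : ℕ → ℕ, StrictMono k ∧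
      ∃ V : ℕ → Set (EuclideanSpace ℝ (Fin n)),
        (∀ l, V l ∈ nhds x₀) ∧
        (∀ l, V l ⊆ ball x₀ ((2 : ℝ) ^ (-(l : ℤ)))) ∧
        (∀ l, x (k l) ∈ V l ∧ y (k l) ∈ V l) ∧
        ∀ l, ∃ γ : ℝ → EuclideanSpace ℝ (Fin n),
          ContinuousOn γ (Icc 0 1) ∧ γ 0 = x (k l) ∧ γ 1 = y (k l) ∧
          γ '' Icc 0 1 ⊆ V l ∩ D ∧ (γ '' Icc 0 1 ∩ E).encard ≤ (m - 1 : ℕ) := by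
  classical
  have hkey : ∀ l : ℕ, ∃ ρ : ℝ, 0 < ρ ∧ ρ ≤ (2:ℝ)^(-(l:ℤ)) ∧
      ∀ x' ∈ ball x₀ ρ ∩ (D \ E), ∀ y' ∈ ball x₀ ρ ∩ (D \ E),
      ∃ p : Path x' y', range ⇑p ⊆ ball x₀ ((2:ℝ)^(-(l:ℤ))) ∩ D ∧
        (range ⇑p ∩ E).encard ≤ ((m - 1 : ℕ) : ℕ∞) := by
    intro l
    exact Stmt0Proof.key D hDopen x₀ E hEclosed hEnwd hfc m hm hx₀fc (by positivity)
  choose ρ hρpos hρle hjoin using hkey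
  have hNl : ∀ l, ∃ N, ∀ k ≥ N, x k ∈ ball x₀ (ρ l) ∧ y k ∈ ball x₀ (ρ l) := by
    intro l
    have h1 := hxconv.eventually (ball_mem_nhds x₀ (hρpos l))
    have h2 := hyconv.eventually (ball_mem_nhds x₀ (hρpos l))
    exact Filter.eventually_atTop.mp (h1.and h2)
  choose N hN using hNl
  set k : ℕ → ℕ := fun l => Nat.rec (N 0) (fun i prev => max (N (i+1)) (prev + 1)) l with hk
  have hksucc : ∀ l, k (l+1) = max (N (l+1)) (k l + 1) := fun l => rfl
  have hkmono : StrictMono k := strictMono_nat_of_lt_succ (fun l => by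
    rw [hksucc]
    exact lt_of_lt_of_le (Nat.lt_succ_self _) (le_max_right _ _))
  have hkN : ∀ l, N l ≤ k l := by
    intro l
    cases l with
    | zero => exact le_refl _
    | succ i => rw [hksucc]; exact le_max_left _ _
  refine ⟨k, hkmono, fun l => ball x₀ ((2:ℝ)^(-(l:ℤ))), ?_, ?_, ?_, ?_⟩
  · exact fun l => ball_mem_nhds _ (by positivity)
  · exact fun l => subset_rfl
  · intro l
    have h := hN l (k l) (hkN l)
    exact ⟨ball_subset_ball (hρle l) h.1, ball_subset_ball (hρle l) h.2⟩
  · intro l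
    have h := hN l (k l) (hkN l)
    obtain ⟨p, hp1, hp2⟩ := hjoin l (x (k l)) ⟨h.1, hx (k l)⟩ (y (k l)) ⟨h.2, hy (k l)⟩
    refine ⟨p.extend, p.continuous_extend.continuousOn, Path.extend_zero p, Path.extend_one p,
      ?_, ?_⟩
    · rintro w ⟨t, ht, rfl⟩
      have heq : p.extend t = p ⟨t, ht⟩ := Path.extend_apply p ht
      rw [heq]
      exact hp1 (mem_range_self _)
    · refine le_trans (Set.encard_le_encard ?_) hp2
      rintro w ⟨⟨t, ht, rfl⟩, hwE⟩
      have heq : p.extend t = p ⟨t, ht⟩ := Path.extend_apply p ht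
      refine ⟨?_, hwE⟩
      rw [heq]
      exact mem_range_self _
end

section
/- Let n ≥ 2 and let F : ℝⁿ → [0, ∞] be a Lebesgue measurable function. Then ∫_{ℝⁿ∖{0}} F(x/|x|²) · dm(x)/(1 + |x|²)ⁿ = ∫_{ℝⁿ∖{0}} F(y) · dm(y)/(1 + |y|²)ⁿ. In other words, the weighted integral ∫ F(y) (1 + |y|²)^{−n} dm(y) is invariant under precomposition of F with the inversion ψ(x) = x/|x|². -/
open MeasureTheory EuclideanGeometry Set
open scoped ENNReal

lemma ennreal_aux (a b c : ℝ≥0∞) (ha : a ≠ 0) (ha' : a ≠ ∞) :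
    a * (c / (b * a)) = c / b := by
  rw [div_eq_mul_inv, ENNReal.mul_inv (Or.inr ha') (Or.inr ha)]
  calc a * (c * (b⁻¹ * a⁻¹)) = (c * b⁻¹) * (a * a⁻¹) := by ring
    _ = c / b := by rw [ENNReal.mul_inv_cancel ha ha', mul_one, div_eq_mul_inv]

lemma det_aux {n : ℕ} (x : EuclideanSpace ℝ (Fin n)) (hx : x ≠ 0) :
    |(((1 / dist x 0) ^ 2 •
        ((Submodule.reflection (ℝ ∙ (x - 0))ᗮ : EuclideanSpace ℝ (Fin n) ≃ₗᵢ[ℝ] _) :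
          EuclideanSpace ℝ (Fin n) →L[ℝ] EuclideanSpace ℝ (Fin n))) :
        EuclideanSpace ℝ (Fin n) →L[ℝ] EuclideanSpace ℝ (Fin n)).det| = ((‖x‖ ^ 2)⁻¹) ^ n := by
  set K := (ℝ ∙ (x - 0))ᗮ
  set A : EuclideanSpace ℝ (Fin n) →L[ℝ] EuclideanSpace ℝ (Fin n) :=
    ((Submodule.reflection K : EuclideanSpace ℝ (Fin n) ≃ₗᵢ[ℝ] EuclideanSpace ℝ (Fin n)) :
      EuclideanSpace ℝ (Fin n) →L[ℝ] EuclideanSpace ℝ (Fin n)) with hA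
  have hd : |A.det| = 1 := by
    have hcomp : ((A : EuclideanSpace ℝ (Fin n) →ₗ[ℝ] EuclideanSpace ℝ (Fin n)) ∘ₗ
        (A : EuclideanSpace ℝ (Fin n) →ₗ[ℝ] EuclideanSpace ℝ (Fin n)) :
        EuclideanSpace ℝ (Fin n) →ₗ[ℝ] EuclideanSpace ℝ (Fin n)) = LinearMap.id := by
      ext y
      simp [hA, Submodule.reflection_reflection]
    have : A.det * A.det = 1 := by
      rw [← LinearMap.det_comp, hcomp, LinearMap.det_id]
    rcases mul_self_eq_one_iff.1 this with h | h <;> simp [h]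
  have hsm : ((((1 / dist x 0) ^ 2 • A :
      EuclideanSpace ℝ (Fin n) →L[ℝ] EuclideanSpace ℝ (Fin n))) :
      EuclideanSpace ℝ (Fin n) →ₗ[ℝ] EuclideanSpace ℝ (Fin n))
      = (1 / dist x 0) ^ 2 • (A : EuclideanSpace ℝ (Fin n) →ₗ[ℝ] EuclideanSpace ℝ (Fin n)) := by
    ext y; simp
  have : ((1 / dist x 0) ^ 2 • A).det
      = ((1 / dist x 0) ^ 2) ^ n * A.det := by
    show LinearMap.det _ = _
    rw [hsm, LinearMap.det_smul, finrank_euclideanSpace_fin]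
  rw [this, abs_mul, abs_pow, hd, mul_one]
  congr 1
  rw [dist_zero_right, abs_of_nonneg (by positivity), one_div, ← inv_pow]

/-- The weighted integral `∫ F(y) (1+|y|²)^{-n} dm(y)` over `ℝⁿ∖{0}`
is invariant under precomposition of `F` with the inversion `ψ(x) = x/|x|²`. -/
theorem stmt_6 {n : ℕ} (hn : 2 ≤ n)
    (F : EuclideanSpace ℝ (Fin n) → ℝ≥0∞) (hF : Measurable F) :
    ∫⁻ x in {(0 : EuclideanSpace ℝ (Fin n))}ᶜ,
        F ((‖x‖ ^ 2)⁻¹ • x) / ENNReal.ofReal ((1 + ‖x‖ ^ 2) ^ n)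
      = ∫⁻ y in {(0 : EuclideanSpace ℝ (Fin n))}ᶜ,
          F y / ENNReal.ofReal ((1 + ‖y‖ ^ 2) ^ n) := by
  set s : Set (EuclideanSpace ℝ (Fin n)) := {0}ᶜ with hsdef
  have hs : MeasurableSet s := (measurableSet_singleton 0).compl
  set f : EuclideanSpace ℝ (Fin n) → EuclideanSpace ℝ (Fin n) := inversion (0 : _) 1 with hfdef
  have hfeq : ∀ x, f x = (‖x‖ ^ 2)⁻¹ • x := by
    intro x; simp [hfdef, inversion_def, dist_eq_norm, div_pow, one_pow]
  have hmem : ∀ x : EuclideanSpace ℝ (Fin n), x ≠ 0 → f x ≠ 0 := by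
    intro x hx h
    have := dist_inversion_center (0 : EuclideanSpace ℝ (Fin n)) x 1
    rw [show f x = inversion 0 1 x from rfl] at h
    rw [h] at this
    simp only [dist_self, one_pow] at this
    rw [dist_eq_norm, sub_zero] at this
    exact hx (norm_eq_zero.1 (by
      rcases eq_or_ne ‖x‖ 0 with h0 | h0
      · exact h0
      · exact absurd this.symm (by positivity)))
  have hinj : InjOn f s := (inversion_injective (0 : EuclideanSpace ℝ (Fin n)) one_ne_zero).injOn
  have himg : f '' s = s := by
    apply Subset.antisymm
    · rintro y ⟨x, hx, rfl⟩
      exact hmem x hx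
    · intro y hy
      exact ⟨f y, hmem y hy, inversion_inversion 0 one_ne_zero y⟩
  set f' : EuclideanSpace ℝ (Fin n) → (EuclideanSpace ℝ (Fin n) →L[ℝ] EuclideanSpace ℝ (Fin n)) :=
    fun x => ((1 / dist x 0) ^ 2) • ((Submodule.reflection (ℝ ∙ (x - 0))ᗮ :
      EuclideanSpace ℝ (Fin n) ≃ₗᵢ[ℝ] _) : _ →L[ℝ] _) with hf'def
  have hf' : ∀ x ∈ s, HasFDerivWithinAt f (f' x) s x := fun x hx =>
    (hasFDerivAt_inversion (by simpa [hsdef] using hx)).hasFDerivWithinAt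
  have key := lintegral_image_eq_lintegral_abs_det_fderiv_mul volume hs hf' hinj
    (fun y => F y / ENNReal.ofReal ((1 + ‖y‖ ^ 2) ^ n))
  rw [himg] at key
  rw [key]
  apply setLIntegral_congr_fun hs
  intro x hx
  dsimp only
  have hx0 : x ≠ 0 := hx
  have hnx : (0 : ℝ) < ‖x‖ := norm_pos_iff.2 hx0
  rw [show f' x = ((1 / dist x 0) ^ 2) • ((Submodule.reflection (ℝ ∙ (x - 0))ᗮ :
      EuclideanSpace ℝ (Fin n) ≃ₗᵢ[ℝ] _) : _ →L[ℝ] _) from rfl,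
    det_aux x hx0, hfeq x]
  have hnorm : ‖(‖x‖ ^ 2)⁻¹ • x‖ ^ 2 = (‖x‖ ^ 2)⁻¹ := by
    rw [norm_smul, mul_pow, norm_inv, norm_pow, Real.norm_eq_abs, abs_of_nonneg hnx.le]
    field_simp
  rw [hnorm]
  have h1 : (1 + (‖x‖ ^ 2)⁻¹) ^ n = (1 + ‖x‖ ^ 2) ^ n * ((‖x‖ ^ 2)⁻¹) ^ n := by
    rw [← mul_pow]
    congr 1
    field_simp
    ring
  rw [h1, ENNReal.ofReal_mul (by positivity)]
  exact (ennreal_aux _ _ _ (ENNReal.ofReal_pos.2 (by positivity)).ne'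
    ENNReal.ofReal_ne_top).symm
end
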